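/- Let m₁, …, mₙ be completely additive measures on an effect algebra E satisfying (RDP). Then m = m₁ ∨ ⋯ ∨ mₙ, the supremum taken in the lattice-ordered group J(E), is also a completely additive measure on E. -/

import Mathlib

universe u v

/-- A pseudo effect algebra: a partial algebra `(E; +, 0, 1)` with a partially defined
binary operation (modelled as `E → E → Option E`) satisfying (i)-(iv). -/
structure PseudoEffectAlgebra (E : Type u) where
  add : E → E → Option E
  zero : E
  one : E
  /-- (i) `a+b` and `(a+b)+c` exist iff `b+c` and `a+(b+c)` exist, and then they are equal. -/
  assoc : ∀ a b c x : E,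
    (∃ ab, add a b = some ab ∧ add ab c = some x) ↔
    (∃ bc, add b c = some bc ∧ add a bc = some x)
  /-- (ii) there is exactly one `d` with `a + d = 1`. -/
  rinv : ∀ a : E, ∃! d, add a d = some one
  /-- (ii) there is exactly one `e` with `e + a = 1`. -/
  linv : ∀ a : E, ∃! e, add e a = some one
  /-- (iii) if `a+b` exists there are `d, e` with `a+b = d+a = b+e`. -/
  com_ex : ∀ a b ab : E, add a b = some ab →
    (∃ d, add d a = some ab) ∧ (∃ e, add b e = some ab)
  /-- (iv) if `1 + a` exists then `a = 0`. -/
  one_add : ∀ a x : E, add one a = some x → a = zero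
  /-- (iv) if `a + 1` exists then `a = 0`. -/
  add_one : ∀ a x : E, add a one = some x → a = zero

namespace PseudoEffectAlgebra

variable {E : Type u}

/-- `a ≤ b` iff `a + c = b` for some `c`. -/
def le (P : PseudoEffectAlgebra E) (a b : E) : Prop := ∃ c, P.add a c = some b

/-- The Riesz Decomposition Property (RDP). -/
def RDP (P : PseudoEffectAlgebra E) : Prop :=
  ∀ a₁ a₂ b₁ b₂ x : E, P.add a₁ a₂ = some x → P.add b₁ b₂ = some x →
    ∃ d₁ d₂ d₃ d₄, P.add d₁ d₂ = some a₁ ∧ P.add d₃ d₄ = some a₂ ∧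
      P.add d₁ d₃ = some b₁ ∧ P.add d₂ d₄ = some b₂

/-- A pseudo effect algebra with commutative `+` is an effect algebra. -/
def Commutative (P : PseudoEffectAlgebra E) : Prop := ∀ a b : E, P.add a b = P.add b a

/-- A signed measure: additive on existing sums. -/
def IsSignedMeasure (P : PseudoEffectAlgebra E) (m : E → ℝ) : Prop :=
  ∀ a b ab : E, P.add a b = some ab → m ab = m a + m b

/-- A measure: a nonnegative signed measure. -/
def IsMeasure (P : PseudoEffectAlgebra E) (m : E → ℝ) : Prop :=
  IsSignedMeasure P m ∧ ∀ a : E, 0 ≤ m a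

/-- A state: a normalized measure. -/
def IsState (P : PseudoEffectAlgebra E) (s : E → ℝ) : Prop :=
  IsMeasure P s ∧ s P.one = 1

/-- A Jordan signed measure: a difference of two measures. -/
def IsJordan (P : PseudoEffectAlgebra E) (m : E → ℝ) : Prop :=
  ∃ m₁ m₂ : E → ℝ, IsMeasure P m₁ ∧ IsMeasure P m₂ ∧ m = m₁ - m₂

/-- `J(E)`, the set of Jordan signed measures. -/
def Jordan (P : PseudoEffectAlgebra E) : Set (E → ℝ) := {m | IsJordan P m}

/-- `M⁺(E)`, the set of measures. -/
def Measures (P : PseudoEffectAlgebra E) : Set (E → ℝ) := {m | IsMeasure P m}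

/-- `S(E)`, the set of states. -/
def States (P : PseudoEffectAlgebra E) : Set (E → ℝ) := {s | IsState P s}

/-- `sup` is the least upper bound of `S` computed within the subset `J`
(with the pointwise order `≤⁺` on functions). -/
def IsLubIn (J S : Set (E → ℝ)) (sup : E → ℝ) : Prop :=
  sup ∈ J ∧ (∀ m ∈ S, m ≤ sup) ∧ ∀ b ∈ J, (∀ m ∈ S, m ≤ b) → sup ≤ b

/-- `inf` is the greatest lower bound of `S` computed within the subset `J`. -/
def IsGlbIn (J S : Set (E → ℝ)) (inf : E → ℝ) : Prop :=
  inf ∈ J ∧ (∀ m ∈ S, inf ≤ m) ∧ ∀ b ∈ J, (∀ m ∈ S, b ≤ m) → b ≤ inf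

/-- `SumList P [x₁, …, xₙ] x` means the sum `x₁ + ⋯ + xₙ` is defined in `E` and equals `x`. -/
inductive SumList (P : PseudoEffectAlgebra E) : List E → E → Prop
  | single (a : E) : SumList P [a] a
  | cons {l : List E} {b : E} (a ab : E) :
      SumList P l b → P.add a b = some ab → SumList P (a :: l) ab

/-- A face of a convex set `K`: a convex extreme subset. -/
def IsFace (K F : Set (E → ℝ)) : Prop := Convex ℝ F ∧ IsExtreme ℝ K F

/-- The complementary face `F'` of `F` in `K`: the union of all faces of `K` disjoint from `F`. -/
def ComplFace (K F : Set (E → ℝ)) : Set (E → ℝ) :=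
  ⋃₀ {G | IsFace K G ∧ Disjoint G F}

/-- The cone `V(F) = {α s : α ≥ 0, s ∈ F}` generated by a subset `F` of the state space. -/
def VCone (F : Set (E → ℝ)) : Set (E → ℝ) :=
  {m | ∃ α : ℝ, 0 ≤ α ∧ ∃ s ∈ F, m = α • s}

/-- `V(F)` is `∨`-closed: for every chain in `V(F)` bounded above in `M⁺(E)`,
the supremum taken in `J(E)` belongs to `V(F)`. -/
def VeeClosed (P : PseudoEffectAlgebra E) (F : Set (E → ℝ)) : Prop :=
  ∀ C : Set (E → ℝ), C ⊆ VCone F → C.Nonempty → IsChain (· ≤ ·) C →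
    (∃ b ∈ Measures P, ∀ m ∈ C, m ≤ b) →
    ∀ msup : E → ℝ, IsLubIn (Jordan P) C msup → msup ∈ VCone F

/-- `a` is the supremum of `S ⊆ E` in the partial order of `E`. -/
def IsLUBe (P : PseudoEffectAlgebra E) (S : Set E) (a : E) : Prop :=
  (∀ x ∈ S, P.le x a) ∧ ∀ b : E, (∀ x ∈ S, P.le x b) → P.le a b

/-- A σ-additive (signed) measure. -/
def SigmaAdditive (P : PseudoEffectAlgebra E) (m : E → ℝ) : Prop :=
  ∀ (a_ : ℕ → E) (a : E), (∀ n : ℕ, P.le (a_ n) (a_ (n + 1))) →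
    IsLUBe P (Set.range a_) a →
    Filter.Tendsto (fun n => m (a_ n)) Filter.atTop (nhds (m a))

/-- An upwards continuous (signed) measure: `{a_t} ↑ a` implies `{m(a_t)} ↑ m(a)`. -/
def UpwardsContinuous (P : PseudoEffectAlgebra E) (m : E → ℝ) : Prop :=
  ∀ {T : Type v} [Nonempty T] (a_ : T → E) (a : E),
    (∀ s t : T, ∃ r : T, P.le (a_ s) (a_ r) ∧ P.le (a_ t) (a_ r)) →
    IsLUBe P (Set.range a_) a →
    IsLUB (Set.range fun t => m (a_ t)) (m a)

/-- The system `{a_t}_{t ∈ T}` is summable with sum `a`: every finite subsystem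
(coded by a duplicate-free list) has a sum in `E`, and `a` is the supremum of
all such finite partial sums. -/
def IsSummableSum (P : PseudoEffectAlgebra E) {T : Type v} (a_ : T → E) (a : E) : Prop :=
  (∀ l : List T, l ≠ [] → l.Nodup → ∃ x : E, SumList P (l.map a_) x) ∧
  IsLUBe P {x : E | ∃ l : List T, l.Nodup ∧ SumList P (l.map a_) x} a

/-- A completely additive (signed) measure: whenever `a = Σ_{t∈T} a_t`, the value `m a`
is the supremum of the finite partial sums `Σ_{t∈F} m (a_t)`. -/
def CompletelyAdditive (P : PseudoEffectAlgebra E) (m : E → ℝ) : Prop :=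
  ∀ {T : Type v} (a_ : T → E) (a : E), IsSummableSum P a_ a →
    IsLUB {r : ℝ | ∃ l : List T, l.Nodup ∧ r = (l.map (fun t => m (a_ t))).sum} (m a)

/-- An ideal of a pseudo effect algebra. -/
def IsIdeal (P : PseudoEffectAlgebra E) (I : Set E) : Prop :=
  P.zero ∈ I ∧
  (∀ a ∈ I, ∀ b ∈ I, ∀ ab : E, P.add a b = some ab → ab ∈ I) ∧
  (∀ a b : E, b ∈ I → P.le a b → a ∈ I)

/-- A normal ideal: `a + I = I + a` for all `a`. -/
def IsNormalIdeal (P : PseudoEffectAlgebra E) (I : Set E) : Prop :=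
  IsIdeal P I ∧
  ∀ a : E, {x : E | ∃ b ∈ I, P.add a b = some x} = {x : E | ∃ b ∈ I, P.add b a = some x}

/-- `m₁ ≪_ε m₂`: `m₁` is `m₂`-continuous. -/
def EpsCont (m₁ m₂ : E → ℝ) : Prop :=
  ∀ ε : ℝ, 0 < ε → ∃ δ : ℝ, 0 < δ ∧ ∀ a : E, m₂ a < δ → m₁ a < ε

/-- `m₁ ≪ m₂`: `m₁` is absolutely continuous with respect to `m₂`. -/
def AbsCont (m₁ m₂ : E → ℝ) : Prop := ∀ a : E, m₂ a = 0 → m₁ a = 0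

/-- `a⁻ = 1 ⧵ a`, the unique element with `a⁻ + a = 1`. -/
noncomputable def lneg (P : PseudoEffectAlgebra E) (a : E) : E := (P.linv a).exists.choose

/-- `a` is central (Boolean): `a ∧ a⁻ = 0`. -/
def IsCentral (P : PseudoEffectAlgebra E) (a : E) : Prop :=
  ∀ x : E, P.le x a → P.le x (lneg P a) → x = P.zero

/-- `E` is monotone σ-complete. -/
def MonotoneSigmaComplete (P : PseudoEffectAlgebra E) : Prop :=
  ∀ a_ : ℕ → E, (∀ n : ℕ, P.le (a_ n) (a_ (n + 1))) → ∃ a : E, IsLUBe P (Set.range a_) a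

/-- `m ⊥ t`: there is `a ∈ E` with `t a = 0` and `m a⁻ = 0`. -/
def Perp (P : PseudoEffectAlgebra E) (m t : E → ℝ) : Prop :=
  ∃ a : E, t a = 0 ∧ m (lneg P a) = 0

/-- Unique decomposition of every measure `m` as `m = m₁ + m₂` with `m₁` a measure
satisfying `Q` and `m₂` a measure singular with respect to the measures satisfying `Q`. -/
def MeasDecomp (P : PseudoEffectAlgebra E) (Q : (E → ℝ) → Prop) : Prop :=
  ∀ m ∈ Measures P, ∃ m₁ m₂ : E → ℝ,
    (IsMeasure P m₁ ∧ Q m₁) ∧ IsMeasure P m₂ ∧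
    (∀ t : E → ℝ, IsMeasure P t → Q t → t ≤ m₂ → t = 0) ∧
    m = m₁ + m₂ ∧
    (∀ m₁' m₂' : E → ℝ, (IsMeasure P m₁' ∧ Q m₁') → IsMeasure P m₂' →
      (∀ t : E → ℝ, IsMeasure P t → Q t → t ≤ m₂' → t = 0) →
      m = m₁' + m₂' → m₁' = m₁ ∧ m₂' = m₂)

/-- Unique convex decomposition of every state `s` as `s = λ₁ s₁ + λ₂ s₂` with `s₁` a state
satisfying `Q` and `s₂` a state such that `α s' ≤⁺ s₂` with `s'` a state satisfying `Q`
and `α ≥ 0` forces `α = 0`. -/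
def StateDecomp (P : PseudoEffectAlgebra E) (Q : (E → ℝ) → Prop) : Prop :=
  ∀ s ∈ States P, ∃ l₁ l₂ : ℝ, 0 ≤ l₁ ∧ 0 ≤ l₂ ∧ l₁ + l₂ = 1 ∧
    ∃ s₁ s₂ : E → ℝ,
      (IsState P s₁ ∧ Q s₁) ∧ IsState P s₂ ∧
      (∀ (s' : E → ℝ) (α : ℝ), IsState P s' → Q s' → 0 ≤ α → α • s' ≤ s₂ → α = 0) ∧
      s = l₁ • s₁ + l₂ • s₂ ∧
      (∀ (μ₁ μ₂ : ℝ) (s₁' s₂' : E → ℝ), 0 ≤ μ₁ → 0 ≤ μ₂ → μ₁ + μ₂ = 1 →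
        (IsState P s₁' ∧ Q s₁') → IsState P s₂' →
        (∀ (s' : E → ℝ) (α : ℝ), IsState P s' → Q s' → 0 ≤ α → α • s' ≤ s₂' → α = 0) →
        s = μ₁ • s₁' + μ₂ • s₂' →
        μ₁ = l₁ ∧ μ₂ = l₂ ∧ (l₁ ≠ 0 → s₁' = s₁) ∧ (l₂ ≠ 0 → s₂' = s₂))

end PseudoEffectAlgebra

open PseudoEffectAlgebra


section Aux
variable {E' : Type u} (P : PseudoEffectAlgebra E')

lemma jordan_signed {m : E' → ℝ} (h : m ∈ Jordan P) : IsSignedMeasure P m := by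
  obtain ⟨p, q, hp, hq, rfl⟩ := h
  intro a b ab hab
  have h1 := hp.1 a b ab hab
  have h2 := hq.1 a b ab hab
  simp only [Pi.sub_apply, h1, h2]; ring

lemma measure_mono {m : E' → ℝ} (hm : IsMeasure P m) {x y : E'} (h : P.le x y) :
    m x ≤ m y := by
  obtain ⟨c, hc⟩ := h
  have := hm.1 x c y hc
  linarith [hm.2 c]

lemma sumlist_apply {m : E' → ℝ} (hm : IsSignedMeasure P m) {L : List E'} {x : E'}
    (h : SumList P L x) : m x = (L.map m).sum := by
  induction h with
  | single a => simp
  | cons a ab h hab ih => simp [hm _ _ _ hab, ih]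

end Aux

/-- The supremum (taken in `J(E)`) of finitely many completely additive
measures on an effect algebra with (RDP) is a completely additive measure. -/
theorem stmt7 {E : Type u} (P : PseudoEffectAlgebra E) (hcomm : P.Commutative)
    (hRDP : P.RDP) (n : ℕ) (hn : 0 < n) (m_ : Fin n → (E → ℝ))
    (hm : ∀ i, IsMeasure P (m_ i) ∧ CompletelyAdditive.{u, v} P (m_ i))
    (m : E → ℝ) (hsup : IsLubIn (Jordan P) (Set.range m_) m) :
    IsMeasure P m ∧ CompletelyAdditive.{u, v} P m := by
  obtain ⟨hmJ, hub, hlub⟩ := hsup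
  have hsgn : IsSignedMeasure P m := jordan_signed P hmJ
  have hnonneg : ∀ x, 0 ≤ m x := fun x =>
    le_trans ((hm ⟨0, hn⟩).1.2 x) (hub _ (Set.mem_range_self _) x)
  have hmeas : IsMeasure P m := ⟨hsgn, hnonneg⟩
  set μ : E → ℝ := fun x => ∑ i, m_ i x with hμdef
  have hμsgn : IsSignedMeasure P μ := by
    intro a b ab hab
    simp only [hμdef]
    rw [← Finset.sum_add_distrib]
    exact Finset.sum_congr rfl fun i _ => (hm i).1.1 a b ab hab
  have hμnn : ∀ x, 0 ≤ μ x := fun x => Finset.sum_nonneg fun i _ => (hm i).1.2 x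
  have hμmeas : IsMeasure P μ := ⟨hμsgn, hμnn⟩
  have hμJ : μ ∈ Jordan P :=
    ⟨μ, 0, hμmeas, ⟨fun a b ab _ => by simp, fun a => le_refl 0⟩, by simp⟩
  have hmleμ : m ≤ μ := by
    refine hlub μ hμJ ?_
    rintro _ ⟨i, rfl⟩ x
    exact Finset.single_le_sum (fun j _ => (hm j).1.2 x) (Finset.mem_univ i)
  refine ⟨hmeas, ?_⟩
  intro T a_ a hsum
  obtain ⟨hex, hlubE⟩ := hsum
  constructor
  · rintro r ⟨l, hnd, rfl⟩
    rcases eq_or_ne l [] with rfl | hne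
    · simpa using hnonneg a
    · obtain ⟨x, hx⟩ := hex l hne hnd
      have hle : P.le x a := hlubE.1 x ⟨l, hnd, hx⟩
      have hval : m x = (l.map fun t => m (a_ t)).sum := by
        rw [sumlist_apply P hsgn hx, List.map_map]; rfl
      rw [← hval]
      exact measure_mono P hmeas hle
  · intro b hb
    have hb0 : (0 : ℝ) ≤ b := hb ⟨[], List.nodup_nil, by simp⟩
    have key : ∀ ε : ℝ, 0 < ε → m a ≤ b + ε := by
      intro ε hε
      classical
      have hεn : (0 : ℝ) < ε / n := by positivity
      have hch : ∀ i : Fin n, ∃ F : Finset T,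
          m_ i a - ε / n < ∑ t ∈ F, m_ i (a_ t) := by
        intro i
        have hlubi := (hm i).2 a_ a ⟨hex, hlubE⟩
        have hlt : m_ i a - ε / n < m_ i a := by linarith
        obtain ⟨r, ⟨l, hnd, rfl⟩, hr⟩ := (lt_isLUB_iff hlubi).1 hlt
        refine ⟨l.toFinset, ?_⟩
        rwa [List.sum_toFinset _ hnd]
      choose F hF using hch
      set G : Finset T := Finset.univ.biUnion F with hGdef
      have hsub : ∀ i, F i ⊆ G := fun i =>
        Finset.subset_biUnion_of_mem F (Finset.mem_univ i)
      rcases eq_or_ne G ∅ with hG | hG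
      · -- all F i empty, so each m_ i a < ε / n
        have hsmall : ∀ i : Fin n, m_ i a < ε / n := by
          intro i
          have hFi : F i = ∅ := Finset.subset_empty.1 (hG ▸ hsub i)
          have := hF i
          rw [hFi] at this
          simpa using this
        have hμa : μ a < ε := by
          have : μ a < ∑ _i : Fin n, (ε / n) :=
            Finset.sum_lt_sum_of_nonempty ⟨⟨0, hn⟩, Finset.mem_univ _⟩
              (fun i _ => hsmall i)
          simpa [Finset.sum_const, Finset.card_univ, mul_div_cancel₀,
            (Nat.cast_ne_zero (R := ℝ)).2 hn.ne'] using this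
        have := hmleμ a
        linarith
      · set l : List T := G.toList with hldef
        have hlne : l ≠ [] := by
          simpa [hldef, Finset.toList_eq_nil] using hG
        have hlnd : l.Nodup := G.nodup_toList
        have hlF : l.toFinset = G := G.toList_toFinset
        obtain ⟨x, hx⟩ := hex l hlne hlnd
        have hle : P.le x a := hlubE.1 x ⟨l, hlnd, hx⟩
        have hvals : ∀ m' : E → ℝ, IsSignedMeasure P m' →
            m' x = ∑ t ∈ G, m' (a_ t) := by
          intro m' hm'
          rw [sumlist_apply P hm' hx, List.map_map, ← hlF,
            List.sum_toFinset _ hlnd]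
          rfl
        have hmx : m x ≤ b := by
          exact hb ⟨l, hlnd, by rw [sumlist_apply P hsgn hx, List.map_map]; rfl⟩
        have hμx : μ a - ε ≤ μ x := by
          have h1 : ∀ i : Fin n, m_ i a - ε / n ≤ m_ i x := by
            intro i
            rw [hvals (m_ i) (hm i).1.1]
            refine le_trans (hF i).le ?_
            exact Finset.sum_le_sum_of_subset_of_nonneg (hsub i)
              (fun t _ _ => (hm i).1.2 (a_ t))
          have h2 : ∑ i : Fin n, (m_ i a - ε / n) ≤ ∑ i : Fin n, m_ i x :=
            Finset.sum_le_sum fun i _ => h1 i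
          have h3 : ∑ i : Fin n, (m_ i a - ε / n) = μ a - ε := by
            rw [Finset.sum_sub_distrib]
            simp [Finset.sum_const, Finset.card_univ, mul_div_cancel₀,
              (Nat.cast_ne_zero (R := ℝ)).2 hn.ne']
            rfl
          rw [h3] at h2
          exact h2
        obtain ⟨c, hc⟩ := hle
        have hma : m a = m x + m c := hsgn x c a hc
        have hμa : μ a = μ x + μ c := hμsgn x c a hc
        have hmc : m c ≤ μ c := hmleμ c
        linarith
    by_contra hcon
    push_neg at hcon
    have := key ((m a - b) / 2) (by linarith)
    linarith
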